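/- For the Laplace random walk, the expected exit time from the strip [0,ρ] is exactly E[τ] = 1 + ρ/√2; equivalently, the per-block trade probability P_trade = 1/E[τ] equals (1 + ρ/√2)^{−1}. -/

import Mathlib

open MeasureTheory ProbabilityTheory Real Filter
open scoped ENNReal NNReal Topology

/-- The Laplace law with density `(1/√2) · exp (−√2 |x|)` (mean 0, variance 1). -/
noncomputable def laplaceMeasure : Measure ℝ :=
  volume.withDensity
    (fun x => ENNReal.ofReal ((1 / Real.sqrt 2) * Real.exp (-(Real.sqrt 2) * |x|)))

/-- First exit time of the walk `S` from the strip `[0, ρ]`. -/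
noncomputable def exitTime {Ω : Type*} (S : ℕ → Ω → ℝ) (ρ : ℝ) (ω : Ω) : ℕ :=
  sInf {n | 0 < n ∧ (S n ω < 0 ∨ ρ < S n ω)}

/-- First passage time of the walk `S` below `0`. -/
noncomputable def hitLow {Ω : Type*} (S : ℕ → Ω → ℝ) (ω : Ω) : ℕ :=
  sInf {n | 0 < n ∧ S n ω < 0}

/-- First passage time of the walk `S` above `ρ`. -/
noncomputable def hitHigh {Ω : Type*} (S : ℕ → Ω → ℝ) (ρ : ℝ) (ω : Ω) : ℕ :=
  sInf {n | 0 < n ∧ ρ < S n ω}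

noncomputable def lf (y : ℝ) : ℝ := (1 / Real.sqrt 2) * Real.exp (-(Real.sqrt 2) * |y|)

lemma lf_nonneg (y : ℝ) : 0 ≤ lf y := by unfold lf; positivity

lemma lf_cont : Continuous lf := by unfold lf; fun_prop

lemma lf_meas : Measurable lf := lf_cont.measurable

lemma laplace_integral (g : ℝ → ℝ) :
    ∫ y, g y ∂laplaceMeasure = ∫ y, lf y * g y := by
  have h1 : laplaceMeasure = volume.withDensity
      (fun x => ((fun x => (lf x).toNNReal) x : ℝ≥0∞)) := rfl
  have hm : Measurable (fun x => (lf x).toNNReal) := lf_meas.real_toNNReal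
  rw [h1, integral_withDensity_eq_integral_smul hm]
  congr 1
  ext y
  simp [NNReal.smul_def, Real.coe_toNNReal _ (lf_nonneg y)]

lemma sqrt2_pos : (0:ℝ) < Real.sqrt 2 := Real.sqrt_pos.2 (by norm_num)
lemma sqrt2_sq : Real.sqrt 2 * Real.sqrt 2 = 2 := Real.mul_self_sqrt (by norm_num)
lemma sqrt2_ne : (Real.sqrt 2) ≠ 0 := ne_of_gt sqrt2_pos

/-- the quadratic solution inside the strip -/
noncomputable def Qf (ρ x : ℝ) : ℝ → ℝ :=
  fun y => (1 + ρ / Real.sqrt 2) + (x + y) * (ρ - x - y)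

noncomputable def G1 (ρ x : ℝ) : ℝ → ℝ := fun y =>
  Real.exp (Real.sqrt 2 * y) *
    (Qf ρ x y * Real.sqrt 2 / 2 - (ρ - 2*x - 2*y)/2 - Real.sqrt 2/2)

noncomputable def G2 (ρ x : ℝ) : ℝ → ℝ := fun y =>
  Real.exp (-(Real.sqrt 2 * y)) *
    (-(Qf ρ x y) * Real.sqrt 2 / 2 - (ρ - 2*x - 2*y)/2 + Real.sqrt 2/2)

lemma Qf_cont (ρ x : ℝ) : Continuous (Qf ρ x) := by unfold Qf; fun_prop

lemma hasDerivAt_Qf (ρ x y : ℝ) : HasDerivAt (Qf ρ x) (ρ - 2*x - 2*y) y := by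
  unfold Qf
  have h1 : HasDerivAt (fun y : ℝ => x + y) 1 y := (hasDerivAt_id y).const_add x
  have h2 : HasDerivAt (fun y : ℝ => ρ - x - y) (-1) y := by
    simpa using ((hasDerivAt_id y).const_sub (ρ - x))
  have := (h1.mul h2).const_add (1 + ρ / Real.sqrt 2)
  refine this.congr_deriv (Eq.symm ?_)
  ring

lemma hasDerivAt_G1 (ρ x y : ℝ) :
    HasDerivAt (G1 ρ x) (Real.exp (Real.sqrt 2 * y) * Qf ρ x y) y := by
  have he : HasDerivAt (fun y => Real.exp (Real.sqrt 2 * y))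
      (Real.exp (Real.sqrt 2 * y) * Real.sqrt 2) y := by
    simpa using ((hasDerivAt_id y).const_mul (Real.sqrt 2)).exp
  have hin : HasDerivAt (fun y => Qf ρ x y * Real.sqrt 2 / 2 - (ρ - 2*x - 2*y)/2 - Real.sqrt 2/2)
      ((ρ - 2*x - 2*y) * Real.sqrt 2 / 2 + 1) y := by
    have h1 := ((hasDerivAt_Qf ρ x y).mul_const (Real.sqrt 2)).div_const 2
    have h2 : HasDerivAt (fun y : ℝ => (ρ - 2*x - 2*y)/2) (-1) y := by
      have : HasDerivAt (fun y : ℝ => ρ - 2*x - 2*y) (-2) y := by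
        simpa using (((hasDerivAt_id y).const_mul 2).const_sub (ρ - 2*x))
      simpa using this.div_const 2
    have := (h1.sub h2).sub_const (Real.sqrt 2/2)
    refine this.congr_deriv (Eq.symm ?_)
    ring
  have := he.mul hin
  refine this.congr_deriv (Eq.symm ?_)
  have hc2 := sqrt2_sq
  linear_combination (-(Real.exp (Real.sqrt 2 * y) * (Qf ρ x y - 1) / 2)) * hc2

lemma hasDerivAt_G2 (ρ x y : ℝ) :
    HasDerivAt (G2 ρ x) (Real.exp (-(Real.sqrt 2 * y)) * Qf ρ x y) y := by
  have he : HasDerivAt (fun y => Real.exp (-(Real.sqrt 2 * y)))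
      (Real.exp (-(Real.sqrt 2 * y)) * (-(Real.sqrt 2))) y := by
    simpa using (((hasDerivAt_id y).const_mul (Real.sqrt 2)).neg).exp
  have hin : HasDerivAt
      (fun y => -(Qf ρ x y) * Real.sqrt 2 / 2 - (ρ - 2*x - 2*y)/2 + Real.sqrt 2/2)
      (-(ρ - 2*x - 2*y) * Real.sqrt 2 / 2 + 1) y := by
    have h1 := (((hasDerivAt_Qf ρ x y).neg).mul_const (Real.sqrt 2)).div_const 2
    have h2 : HasDerivAt (fun y : ℝ => (ρ - 2*x - 2*y)/2) (-1) y := by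
      have : HasDerivAt (fun y : ℝ => ρ - 2*x - 2*y) (-2) y := by
        simpa using (((hasDerivAt_id y).const_mul 2).const_sub (ρ - 2*x))
      simpa using this.div_const 2
    have := (h1.sub h2).add_const (Real.sqrt 2/2)
    refine this.congr_deriv (Eq.symm ?_)
    ring
  have := he.mul hin
  refine this.congr_deriv (Eq.symm ?_)
  have hc2 := sqrt2_sq
  linear_combination (-(Real.exp (-(Real.sqrt 2 * y)) * (Qf ρ x y - 1) / 2)) * hc2

lemma laplace_conv {ρ : ℝ} (hρ : 0 ≤ ρ) {x : ℝ} (hx : x ∈ Set.Icc 0 ρ) :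
    ∫ y, (Set.Icc 0 ρ).indicator
        (fun u => (1 + ρ / Real.sqrt 2) + u * (ρ - u)) (x + y) ∂laplaceMeasure
      = ((1 + ρ / Real.sqrt 2) + x * (ρ - x)) - 1 := by
  obtain ⟨hx0, hxρ⟩ := hx
  have hc0 : (0:ℝ) < Real.sqrt 2 := sqrt2_pos
  have hc2 : Real.sqrt 2 * Real.sqrt 2 = 2 := sqrt2_sq
  have hcne : Real.sqrt 2 ≠ 0 := sqrt2_ne
  rw [laplace_integral]
  have key : (fun y => lf y * (Set.Icc 0 ρ).indicator
        (fun u => (1 + ρ / Real.sqrt 2) + u * (ρ - u)) (x + y))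
      = (Set.Icc (-x) (ρ - x)).indicator (fun y => lf y * Qf ρ x y) := by
    funext y
    by_cases h : y ∈ Set.Icc (-x) (ρ - x)
    · rw [Set.mem_Icc] at h
      obtain ⟨h1, h2⟩ := h
      have hmem : x + y ∈ Set.Icc 0 ρ := Set.mem_Icc.mpr ⟨by linarith, by linarith⟩
      rw [Set.indicator_of_mem (Set.mem_Icc.mpr ⟨h1, h2⟩), Set.indicator_of_mem hmem]
      unfold Qf
      ring_nf
    · have hmem : x + y ∉ Set.Icc 0 ρ := by
        rw [Set.mem_Icc] at h ⊢
        push_neg at h ⊢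
        intro h0
        have := h (by linarith)
        linarith
      rw [Set.indicator_of_notMem h, Set.indicator_of_notMem hmem, mul_zero]
  rw [key, integral_indicator measurableSet_Icc, MeasureTheory.integral_Icc_eq_integral_Ioc,
    ← intervalIntegral.integral_of_le (by linarith : -x ≤ ρ - x)]
  have hcont : Continuous (fun y => lf y * Qf ρ x y) := lf_cont.mul (Qf_cont ρ x)
  rw [← intervalIntegral.integral_add_adjacent_intervals
    (a := -x) (b := 0) (c := ρ - x) (f := fun y => lf y * Qf ρ x y) (μ := volume)
    (hcont.intervalIntegrable _ _) (hcont.intervalIntegrable _ _)]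
  have hleft : ∫ y in (-x)..0, lf y * Qf ρ x y
      = ∫ y in (-x)..0, (1/Real.sqrt 2) * (Real.exp (Real.sqrt 2 * y) * Qf ρ x y) := by
    apply intervalIntegral.integral_congr
    intro y hy
    rw [Set.uIcc_of_le (by linarith : -x ≤ (0:ℝ))] at hy
    have hy2 : y ≤ 0 := hy.2
    show lf y * Qf ρ x y = _
    unfold lf
    rw [abs_of_nonpos hy2]
    ring_nf
  have hright : ∫ y in (0:ℝ)..(ρ-x), lf y * Qf ρ x y
      = ∫ y in (0:ℝ)..(ρ-x), (1/Real.sqrt 2) * (Real.exp (-(Real.sqrt 2 * y)) * Qf ρ x y) := by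
    apply intervalIntegral.integral_congr
    intro y hy
    rw [Set.uIcc_of_le (by linarith : (0:ℝ) ≤ ρ - x)] at hy
    have hy1 : 0 ≤ y := hy.1
    show lf y * Qf ρ x y = _
    unfold lf
    rw [abs_of_nonneg hy1]
    ring_nf
  have hI₁ : ∫ y in (-x)..0, Real.exp (Real.sqrt 2 * y) * Qf ρ x y = G1 ρ x 0 - G1 ρ x (-x) :=
    intervalIntegral.integral_eq_sub_of_hasDerivAt (fun y _ => hasDerivAt_G1 ρ x y)
      (((Real.continuous_exp.comp (continuous_const.mul continuous_id)).mul
        (Qf_cont ρ x)).intervalIntegrable _ _)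
  have hI₂ : ∫ y in (0:ℝ)..(ρ-x), Real.exp (-(Real.sqrt 2 * y)) * Qf ρ x y
      = G2 ρ x (ρ-x) - G2 ρ x 0 :=
    intervalIntegral.integral_eq_sub_of_hasDerivAt (fun y _ => hasDerivAt_G2 ρ x y)
      (((Real.continuous_exp.comp (continuous_const.mul continuous_id).neg).mul
        (Qf_cont ρ x)).intervalIntegrable _ _)
  rw [hleft, hright, intervalIntegral.integral_const_mul, intervalIntegral.integral_const_mul,
    hI₁, hI₂]
  have hG₁x : G1 ρ x (-x) = 0 := by
    unfold G1 Qf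
    have h0 : ((1 + ρ / Real.sqrt 2) + (x + -x) * (ρ - x - -x)) * Real.sqrt 2 / 2
        - (ρ - 2*x - 2*(-x))/2 - Real.sqrt 2/2 = 0 := by
      field_simp <;> ring
    rw [h0, mul_zero]
  have hG₂ρ : G2 ρ x (ρ - x) = 0 := by
    unfold G2 Qf
    have h0 : -((1 + ρ / Real.sqrt 2) + (x + (ρ-x)) * (ρ - x - (ρ-x))) * Real.sqrt 2 / 2
        - (ρ - 2*x - 2*(ρ-x))/2 + Real.sqrt 2/2 = 0 := by
      field_simp <;> ring
    rw [h0, mul_zero]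
  rw [hG₁x, hG₂ρ]
  unfold G1 G2 Qf
  simp only [mul_zero, Real.exp_zero, one_mul, add_zero, zero_mul, neg_zero, sub_zero]
  field_simp <;> ring

section aux
variable {Ω : Type*} [MeasurableSpace Ω] {P : Measure Ω} [IsProbabilityMeasure P]

lemma integrable_of_bound {f : Ω → ℝ} (hf : Measurable f) (C : ℝ) (hC : ∀ ω, |f ω| ≤ C) :
    Integrable f P :=
  (integrable_const C).mono' hf.aestronglyMeasurable (ae_of_all _ (fun ω => by
    simpa using hC ω))

lemma step_fubini (X : ℕ → Ω → ℝ) (hmeas : ∀ i, Measurable (X i))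
    (hindep : iIndepFun X P)
    (hlaw : ∀ i, Measure.map (X i) P = laplaceMeasure) (n : ℕ)
    (F : (↥(Finset.range n) → ℝ) → ℝ → ℝ)
    (hF : Measurable (Function.uncurry F))
    (C : ℝ) (hC : ∀ v z, |F v z| ≤ C) :
    ∫ ω, F (fun i => X i ω) (X n ω) ∂P
      = ∫ v, (∫ z, F v z ∂laplaceMeasure)
          ∂(P.map (fun ω (i : ↥(Finset.range n)) => X i ω)) := by
  haveI : IsProbabilityMeasure laplaceMeasure := by
    rw [← hlaw 0]; exact Measure.isProbabilityMeasure_map (hmeas 0).aemeasurable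
  set V : Ω → (↥(Finset.range n) → ℝ) := fun ω i => X i ω with hV
  have hVm : Measurable V := measurable_pi_lambda _ (fun i => hmeas i)
  have hdisj : Disjoint (Finset.range n) ({n} : Finset ℕ) :=
    Finset.disjoint_singleton_right.mpr (by simp)
  have h1 := hindep.indepFun_finset (Finset.range n) {n} hdisj hmeas
  have h2 : IndepFun V (X n) P := by
    have := h1.comp (measurable_id (α := ↥(Finset.range n) → ℝ))
      (measurable_pi_apply (⟨n, by simp⟩ : ↥({n} : Finset ℕ)))
    exact this
  have hmap : P.map (fun ω => (V ω, X n ω)) = (P.map V).prod (P.map (X n)) :=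
    (indepFun_iff_map_prod_eq_prod_map_map hVm.aemeasurable (hmeas n).aemeasurable).mp h2
  haveI : IsProbabilityMeasure (P.map V) := Measure.isProbabilityMeasure_map hVm.aemeasurable
  have hint : Integrable (Function.uncurry F) ((P.map V).prod laplaceMeasure) :=
    (integrable_const C).mono' hF.aestronglyMeasurable
      (ae_of_all _ (fun p => by simpa [Function.uncurry_def] using hC p.1 p.2))
  calc ∫ ω, F (V ω) (X n ω) ∂P
      = ∫ p, Function.uncurry F p ∂(P.map (fun ω => (V ω, X n ω))) := by
        rw [integral_map (hVm.prodMk (hmeas n)).aemeasurable]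
        · rfl
        · rw [hmap, hlaw n]; exact hF.aestronglyMeasurable
    _ = ∫ p, Function.uncurry F p ∂((P.map V).prod laplaceMeasure) := by
        rw [hmap, hlaw n]
    _ = ∫ v, (∫ z, F v z ∂laplaceMeasure) ∂(P.map V) := by
        rw [MeasureTheory.integral_prod _ hint]
        rfl

end aux

noncomputable def psum (n k : ℕ) (v : ↥(Finset.range n) → ℝ) : ℝ :=
  ∑ i ∈ Finset.range k, if h : i ∈ Finset.range n then v ⟨i, h⟩ else 0

lemma psum_meas (n k : ℕ) : Measurable (psum n k) := by
  apply Finset.measurable_sum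
  intro i _
  by_cases h : i ∈ Finset.range n
  · simpa [h] using measurable_pi_apply (⟨i, h⟩ : ↥(Finset.range n))
  · simp only [h, dif_neg, not_false_iff]
    exact measurable_const

lemma psum_spec {Ω : Type*} (X : ℕ → Ω → ℝ) (n k : ℕ) (hk : k ≤ n) (ω : Ω) :
    psum n k (fun i => X i ω) = ∑ i ∈ Finset.range k, X i ω := by
  apply Finset.sum_congr rfl
  intro i hi
  rw [dif_pos (Finset.mem_range.mpr (lt_of_lt_of_le (Finset.mem_range.mp hi) hk))]

open scoped Classical in
noncomputable def Jf (ρ : ℝ) (n : ℕ) (v : ↥(Finset.range n) → ℝ) : ℝ :=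
  if ∀ k ∈ Finset.Icc 1 n, psum n k v ∈ Set.Icc 0 ρ then 1 else 0

lemma Jf_meas (ρ : ℝ) (n : ℕ) : Measurable (Jf ρ n) := by
  unfold Jf
  have hs : MeasurableSet {v : ↥(Finset.range n) → ℝ |
      ∀ k ∈ Finset.Icc 1 n, psum n k v ∈ Set.Icc 0 ρ} := by
    have : {v : ↥(Finset.range n) → ℝ | ∀ k ∈ Finset.Icc 1 n, psum n k v ∈ Set.Icc 0 ρ}
        = ⋂ k ∈ Finset.Icc 1 n, (psum n k) ⁻¹' (Set.Icc 0 ρ) := by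
      ext v; simp
    rw [this]
    exact MeasurableSet.biInter (Set.to_countable _)
      (fun k _ => (psum_meas n k) measurableSet_Icc)
  exact Measurable.ite hs measurable_const measurable_const

lemma Jf_nonneg (ρ : ℝ) (n : ℕ) (v : ↥(Finset.range n) → ℝ) : 0 ≤ Jf ρ n v := by
  unfold Jf; split <;> norm_num

lemma Jf_le_one (ρ : ℝ) (n : ℕ) (v : ↥(Finset.range n) → ℝ) : Jf ρ n v ≤ 1 := by
  unfold Jf; split <;> norm_num

noncomputable def hf (ρ : ℝ) : ℝ → ℝ :=
  (Set.Icc 0 ρ).indicator (fun u => (1 + ρ / Real.sqrt 2) + u * (ρ - u))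

lemma hf_meas (ρ : ℝ) : Measurable (hf ρ) :=
  Measurable.indicator (by fun_prop) measurableSet_Icc

lemma sqrt2_pos' : (0:ℝ) < Real.sqrt 2 := Real.sqrt_pos.2 (by norm_num)

lemma hf_nonneg {ρ : ℝ} (hρ : 0 ≤ ρ) (u : ℝ) : 0 ≤ hf ρ u := by
  unfold hf
  rw [Set.indicator_apply]
  split
  · next h =>
    obtain ⟨h1, h2⟩ := h
    have : 0 ≤ ρ / Real.sqrt 2 := div_nonneg hρ sqrt2_pos'.le
    nlinarith
  · exact le_refl 0

lemma hf_le {ρ : ℝ} (hρ : 0 ≤ ρ) (u : ℝ) : hf ρ u ≤ (1 + ρ / Real.sqrt 2) + ρ * ρ := by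
  unfold hf
  rw [Set.indicator_apply]
  have : 0 ≤ ρ / Real.sqrt 2 := div_nonneg hρ sqrt2_pos'.le
  split
  · next h =>
    obtain ⟨h1, h2⟩ := h
    nlinarith
  · nlinarith

lemma hf_ge_one {ρ : ℝ} (hρ : 0 ≤ ρ) {u : ℝ} (hu : u ∈ Set.Icc 0 ρ) : 1 ≤ hf ρ u := by
  unfold hf
  rw [Set.indicator_of_mem hu]
  obtain ⟨h1, h2⟩ := hu
  have : 0 ≤ ρ / Real.sqrt 2 := div_nonneg hρ sqrt2_pos'.le
  nlinarith

lemma hf_zero_of_not_mem {ρ : ℝ} {u : ℝ} (hu : u ∉ Set.Icc 0 ρ) : hf ρ u = 0 :=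
  Set.indicator_of_notMem hu _
theorem laplace_expected_exit_time
    {Ω : Type*} [MeasurableSpace Ω] (P : Measure Ω) [IsProbabilityMeasure P]
    (X : ℕ → Ω → ℝ) (hmeas : ∀ i, Measurable (X i))
    (hindep : iIndepFun X P)
    (hlaw : ∀ i, Measure.map (X i) P = laplaceMeasure)
    (S : ℕ → Ω → ℝ) (hS : ∀ n ω, S n ω = ∑ i ∈ Finset.range n, X i ω)
    (ρ : ℝ) (hρ : 0 < ρ)
    (τ : Ω → ℕ) (hτ : ∀ ω, τ ω = exitTime S ρ ω) :
    ∫ ω, (τ ω : ℝ) ∂P = 1 + ρ / Real.sqrt 2 ∧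
    (∫ ω, (τ ω : ℝ) ∂P)⁻¹ = (1 + ρ / Real.sqrt 2)⁻¹ := by
  classical
  have hρ0 : (0:ℝ) ≤ ρ := hρ.le
  have hc0 : (0:ℝ) < Real.sqrt 2 := sqrt2_pos
  haveI hPL : IsProbabilityMeasure laplaceMeasure := by
    rw [← hlaw 0]; exact Measure.isProbabilityMeasure_map (hmeas 0).aemeasurable
  have hSm : ∀ k, Measurable (S k) := by
    intro k
    have hk : S k = fun ω => ∑ i ∈ Finset.range k, X i ω := funext (hS k)
    rw [hk]; exact Finset.measurable_sum _ (fun i _ => hmeas i)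
  have hS0 : ∀ ω, S 0 ω = 0 := fun ω => by simp [hS 0 ω]
  have hSsucc : ∀ n ω, S (n+1) ω = S n ω + X n ω := fun n ω => by
    rw [hS (n+1) ω, hS n ω, Finset.sum_range_succ]
  set I : ℕ → Ω → ℝ :=
    fun n ω => if ∀ k ∈ Finset.Icc 1 n, S k ω ∈ Set.Icc 0 ρ then 1 else 0 with hIdef
  set a : ℕ → ℝ := fun n => ∫ ω, I n ω * hf ρ (S n ω) ∂P with hadef
  set b : ℕ → ℝ := fun n => ∫ ω, I n ω ∂P with hbdef
  -- measurability of I n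
  have hAmeas : ∀ n, MeasurableSet {ω | ∀ k ∈ Finset.Icc 1 n, S k ω ∈ Set.Icc 0 ρ} := by
    intro n
    have : {ω | ∀ k ∈ Finset.Icc 1 n, S k ω ∈ Set.Icc 0 ρ}
        = ⋂ k ∈ Finset.Icc 1 n, (S k) ⁻¹' (Set.Icc 0 ρ) := by ext ω; simp
    rw [this]
    exact MeasurableSet.biInter (Set.to_countable _) (fun k _ => (hSm k) measurableSet_Icc)
  have hIm : ∀ n, Measurable (I n) := fun n =>
    Measurable.ite (hAmeas n) measurable_const measurable_const
  have hI01 : ∀ n ω, I n ω = 0 ∨ I n ω = 1 := by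
    intro n ω; simp only [hIdef]; split <;> simp
  have hInonneg : ∀ n ω, 0 ≤ I n ω := by
    intro n ω; rcases hI01 n ω with h | h <;> rw [h] <;> norm_num
  have hImem : ∀ n ω, I n ω = 1 → S n ω ∈ Set.Icc 0 ρ := by
    intro n ω h
    rcases Nat.eq_zero_or_pos n with h0 | h0
    · subst h0; rw [hS0 ω]; exact ⟨le_refl 0, hρ0⟩
    · simp only [hIdef] at h
      by_cases hc : ∀ k ∈ Finset.Icc 1 n, S k ω ∈ Set.Icc 0 ρ
      · exact hc n (Finset.mem_Icc.mpr ⟨h0, le_refl n⟩)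
      · rw [if_neg hc] at h; norm_num at h
  -- connection with Jf / psum
  have hSpsum : ∀ n ω, psum n n (fun i => X i ω) = S n ω := by
    intro n ω
    rw [psum_spec X n n (le_refl n) ω, hS n ω]
  have hSpsum' : ∀ n k, k ≤ n → ∀ ω, psum n k (fun i => X i ω) = S k ω := by
    intro n k hk ω
    rw [psum_spec X n k hk ω, hS k ω]
  have hIJ : ∀ n ω, I n ω = Jf ρ n (fun i => X i ω) := by
    intro n ω
    have hiff : (∀ k ∈ Finset.Icc 1 n, S k ω ∈ Set.Icc 0 ρ)
        ↔ (∀ k ∈ Finset.Icc 1 n, psum n k (fun i => X i ω) ∈ Set.Icc 0 ρ) :=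
      forall₂_congr fun k hk => by rw [hSpsum' n k (Finset.mem_Icc.mp hk).2 ω]
    simp only [hIdef, Jf, hiff]
    congr
  have hJmem : ∀ n (v : ↥(Finset.range n) → ℝ), Jf ρ n v = 1 →
      psum n n v ∈ Set.Icc 0 ρ := by
    intro n v h
    by_cases hc : ∀ k ∈ Finset.Icc 1 n, psum n k v ∈ Set.Icc 0 ρ
    · rcases Nat.eq_zero_or_pos n with h0 | h0
      · subst h0
        have : psum 0 0 v = 0 := by simp [psum]
        rw [this]; exact ⟨le_refl 0, hρ0⟩
      · exact hc n (Finset.mem_Icc.mpr ⟨h0, le_refl n⟩)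
    · rw [Jf, if_neg hc] at h; norm_num at h
  have hJ01 : ∀ n (v : ↥(Finset.range n) → ℝ), Jf ρ n v = 0 ∨ Jf ρ n v = 1 := by
    intro n v; rw [Jf]; split <;> simp
  -- the step for a
  have hB : (0:ℝ) ≤ (1 + ρ / Real.sqrt 2) + ρ * ρ := by positivity
  have hVm : ∀ n, Measurable (fun ω (i : ↥(Finset.range n)) => X i ω) :=
    fun n => measurable_pi_lambda _ (fun i => hmeas i)
  have hIcc_succ : ∀ n ω, (∀ k ∈ Finset.Icc 1 (n+1), S k ω ∈ Set.Icc 0 ρ)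
      ↔ ((∀ k ∈ Finset.Icc 1 n, S k ω ∈ Set.Icc 0 ρ) ∧ S (n+1) ω ∈ Set.Icc 0 ρ) := by
    intro n ω
    constructor
    · intro h
      refine ⟨fun k hk => ?_, h (n+1) (Finset.mem_Icc.mpr ⟨by omega, le_refl _⟩)⟩
      rcases Finset.mem_Icc.mp hk with ⟨u, v⟩
      exact h k (Finset.mem_Icc.mpr ⟨u, by omega⟩)
    · rintro ⟨h1, h2⟩ k hk
      rcases Finset.mem_Icc.mp hk with ⟨u, v⟩
      rcases Nat.lt_or_ge k (n+1) with h | h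
      · exact h1 k (Finset.mem_Icc.mpr ⟨u, by omega⟩)
      · have : k = n + 1 := by omega
        rwa [this]
  have hIsucc : ∀ n ω, I (n+1) ω
      = I n ω * (Set.Icc 0 ρ).indicator (fun _ => (1:ℝ)) (S n ω + X n ω) := by
    intro n ω
    rw [← hSsucc n ω]
    simp only [hIdef]
    by_cases h1 : ∀ k ∈ Finset.Icc 1 n, S k ω ∈ Set.Icc 0 ρ
    · by_cases h2 : S (n+1) ω ∈ Set.Icc 0 ρ
      · rw [if_pos ((hIcc_succ n ω).mpr ⟨h1, h2⟩), if_pos h1, Set.indicator_of_mem h2, mul_one]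
      · rw [if_neg (fun hc => h2 ((hIcc_succ n ω).mp hc).2), Set.indicator_of_notMem h2,
          mul_zero]
    · rw [if_neg (fun hc => h1 ((hIcc_succ n ω).mp hc).1), if_neg h1, zero_mul]
  have hstepA : ∀ n, a (n+1) = a n - b n := by
    intro n
    have hpt : ∀ ω, I (n+1) ω * hf ρ (S (n+1) ω)
        = (fun (v : ↥(Finset.range n) → ℝ) (z : ℝ) => Jf ρ n v * hf ρ (psum n n v + z))
            (fun i => X i ω) (X n ω) := by
      intro ω
      simp only
      rw [hSpsum n ω, ← hIJ n ω, hIsucc n ω, ← hSsucc n ω]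
      by_cases h2 : S (n+1) ω ∈ Set.Icc 0 ρ
      · rw [Set.indicator_of_mem h2, mul_one]
      · rw [Set.indicator_of_notMem h2, hf_zero_of_not_mem h2]
        ring
    have hFm : Measurable (Function.uncurry
        (fun (v : ↥(Finset.range n) → ℝ) (z : ℝ) => Jf ρ n v * hf ρ (psum n n v + z))) := by
      apply Measurable.mul
      · exact (Jf_meas ρ n).comp measurable_fst
      · exact (hf_meas ρ).comp (((psum_meas n n).comp measurable_fst).add measurable_snd)
    have hFb : ∀ (v : ↥(Finset.range n) → ℝ) (z : ℝ),
        |Jf ρ n v * hf ρ (psum n n v + z)| ≤ (1 + ρ / Real.sqrt 2) + ρ * ρ := by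
      intro v z
      rw [abs_mul]
      have h1 : |Jf ρ n v| ≤ 1 := by
        rcases hJ01 n v with h | h <;> rw [h] <;> norm_num
      have h2 : |hf ρ (psum n n v + z)| ≤ (1 + ρ / Real.sqrt 2) + ρ * ρ := by
        rw [abs_of_nonneg (hf_nonneg hρ0 _)]
        exact hf_le hρ0 _
      calc |Jf ρ n v| * |hf ρ (psum n n v + z)| ≤ 1 * ((1 + ρ / Real.sqrt 2) + ρ * ρ) :=
            mul_le_mul h1 h2 (abs_nonneg _) one_pos.le
        _ = (1 + ρ / Real.sqrt 2) + ρ * ρ := one_mul _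
    have ha1 : a (n+1) = ∫ ω, (fun (v : ↥(Finset.range n) → ℝ) (z : ℝ) =>
        Jf ρ n v * hf ρ (psum n n v + z)) (fun i => X i ω) (X n ω) ∂P := by
      simp only [hadef]
      exact integral_congr_ae (ae_of_all _ hpt)
    rw [ha1, step_fubini X hmeas hindep hlaw n _ hFm _ hFb]
    have hinner : ∀ (v : ↥(Finset.range n) → ℝ),
        ∫ z, Jf ρ n v * hf ρ (psum n n v + z) ∂laplaceMeasure
          = Jf ρ n v * (hf ρ (psum n n v) - 1) := by
      intro v
      rw [integral_const_mul]
      rcases hJ01 n v with h | h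
      · rw [h, zero_mul, zero_mul]
      · rw [h, one_mul, one_mul]
        have hsmem := hJmem n v h
        have := laplace_conv hρ0 hsmem
        unfold hf
        rw [Set.indicator_of_mem hsmem]
        exact this
    simp_rw [hinner]
    have hgm : Measurable (fun (v : ↥(Finset.range n) → ℝ) =>
        Jf ρ n v * (hf ρ (psum n n v) - 1)) :=
      (Jf_meas ρ n).mul (((hf_meas ρ).comp (psum_meas n n)).sub measurable_const)
    rw [integral_map (hVm n).aemeasurable hgm.aestronglyMeasurable]
    have hpt2 : ∀ ω, Jf ρ n (fun i => X i ω) * (hf ρ (psum n n (fun i => X i ω)) - 1)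
        = I n ω * hf ρ (S n ω) - I n ω := by
      intro ω
      rw [hSpsum n ω, ← hIJ n ω, mul_sub, mul_one]
    rw [integral_congr_ae (ae_of_all _ hpt2)]
    have hint1 : Integrable (fun ω => I n ω * hf ρ (S n ω)) P := by
      apply integrable_of_bound ((hIm n).mul ((hf_meas ρ).comp (hSm n)))
        ((1 + ρ / Real.sqrt 2) + ρ * ρ)
      intro ω
      rw [Pi.mul_apply, Function.comp_apply, abs_mul]
      have h1 : |I n ω| ≤ 1 := by rcases hI01 n ω with h | h <;> rw [h] <;> norm_num
      have h2 : |hf ρ (S n ω)| ≤ (1 + ρ / Real.sqrt 2) + ρ * ρ := by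
        rw [abs_of_nonneg (hf_nonneg hρ0 _)]; exact hf_le hρ0 _
      calc |I n ω| * |hf ρ (S n ω)| ≤ 1 * ((1 + ρ / Real.sqrt 2) + ρ * ρ) :=
            mul_le_mul h1 h2 (abs_nonneg _) one_pos.le
        _ = _ := one_mul _
    have hint2 : Integrable (fun ω => I n ω) P := by
      apply integrable_of_bound (hIm n) 1
      intro ω; rcases hI01 n ω with h | h <;> rw [h] <;> norm_num
    rw [integral_sub hint1 hint2]
  set q : ℝ := (laplaceMeasure (Set.Ioi ρ)).toReal with hqdef
  have hLrfl : laplaceMeasure = volume.withDensity (fun x => ENNReal.ofReal (lf x)) := rfl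
  have hqpos : 0 < q := by
    have h2 : ENNReal.ofReal (lf (ρ+1)) * volume (Set.Ioc ρ (ρ+1))
        ≤ laplaceMeasure (Set.Ioc ρ (ρ+1)) := by
      rw [hLrfl, withDensity_apply _ measurableSet_Ioc]
      have hmono : ∀ x ∈ Set.Ioc ρ (ρ+1), ENNReal.ofReal (lf (ρ+1)) ≤ ENNReal.ofReal (lf x) := by
        intro x hx
        apply ENNReal.ofReal_le_ofReal
        unfold lf
        apply mul_le_mul_of_nonneg_left _ (by positivity)
        apply Real.exp_le_exp.mpr
        have h1 : |x| = x := abs_of_pos (lt_of_le_of_lt hρ0 hx.1)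
        have hx2 : |(ρ+1:ℝ)| = ρ+1 := abs_of_pos (by linarith)
        rw [h1, hx2]
        nlinarith [hx.2, sqrt2_pos]
      calc ENNReal.ofReal (lf (ρ+1)) * volume (Set.Ioc ρ (ρ+1))
          = ∫⁻ _ in Set.Ioc ρ (ρ+1), ENNReal.ofReal (lf (ρ+1)) ∂volume := by
            rw [setLIntegral_const]
        _ ≤ ∫⁻ x in Set.Ioc ρ (ρ+1), ENNReal.ofReal (lf x) ∂volume :=
            setLIntegral_mono (lf_meas.ennreal_ofReal) hmono
    have h3 : (0:ℝ≥0∞) < laplaceMeasure (Set.Ioi ρ) := by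
      have hvol : volume (Set.Ioc ρ (ρ+1)) = 1 := by
        rw [Real.volume_Ioc]; simp
      have hlfpos : 0 < lf (ρ+1) := by unfold lf; positivity
      calc (0:ℝ≥0∞) < ENNReal.ofReal (lf (ρ+1)) * volume (Set.Ioc ρ (ρ+1)) := by
            rw [hvol, mul_one]; exact ENNReal.ofReal_pos.mpr hlfpos
        _ ≤ laplaceMeasure (Set.Ioc ρ (ρ+1)) := h2
        _ ≤ laplaceMeasure (Set.Ioi ρ) := measure_mono Set.Ioc_subset_Ioi_self
    exact ENNReal.toReal_pos (ne_of_gt h3) (measure_ne_top _ _)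
  have hq1 : q ≤ 1 := by
    rw [hqdef]
    calc (laplaceMeasure (Set.Ioi ρ)).toReal ≤ (laplaceMeasure Set.univ).toReal :=
      ENNReal.toReal_mono (measure_ne_top _ _) (measure_mono (Set.subset_univ _))
      _ = 1 := by simp
  set r : ℝ := 1 - q with hrdef
  have hr0 : 0 ≤ r := by rw [hrdef]; linarith
  have hr1 : r < 1 := by rw [hrdef]; linarith
  have hstrip : ∀ s ∈ Set.Icc (0:ℝ) ρ,
      ∫ z, (Set.Icc 0 ρ).indicator (fun _ => (1:ℝ)) (s + z) ∂laplaceMeasure ≤ r := by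
    intro s hs
    have hAm : MeasurableSet ((fun z : ℝ => s + z) ⁻¹' (Set.Icc 0 ρ)) :=
      (measurable_const.add measurable_id) measurableSet_Icc
    have heq : (fun z : ℝ => (Set.Icc 0 ρ).indicator (fun _ => (1:ℝ)) (s + z))
        = ((fun z : ℝ => s + z) ⁻¹' (Set.Icc 0 ρ)).indicator (fun _ => (1:ℝ)) := by
      funext z
      simp only [Set.indicator_apply, Set.mem_preimage]
    rw [heq, integral_indicator_const _ hAm]
    simp only [smul_eq_mul, mul_one]
    have hdisj : Disjoint ((fun z : ℝ => s + z) ⁻¹' (Set.Icc 0 ρ)) (Set.Ioi ρ) := by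
      rw [Set.disjoint_left]
      intro z hz1 hz2
      have h1 : s + z ≤ ρ := hz1.2
      have h2 : ρ < z := hz2
      have h3 := hs.1
      linarith
    have hsum : laplaceMeasure ((fun z : ℝ => s + z) ⁻¹' (Set.Icc 0 ρ))
        + laplaceMeasure (Set.Ioi ρ) ≤ 1 := by
      rw [← measure_union hdisj measurableSet_Ioi]
      calc laplaceMeasure _ ≤ laplaceMeasure Set.univ := measure_mono (Set.subset_univ _)
        _ = 1 := measure_univ
    have hfin1 : laplaceMeasure ((fun z : ℝ => s + z) ⁻¹' (Set.Icc 0 ρ)) ≠ ⊤ :=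
      measure_ne_top _ _
    have hfin2 : laplaceMeasure (Set.Ioi ρ) ≠ ⊤ := measure_ne_top _ _
    have h4 := ENNReal.toReal_mono (by norm_num : (1:ℝ≥0∞) ≠ ⊤) hsum
    rw [ENNReal.toReal_add hfin1 hfin2, ENNReal.toReal_one] at h4
    rw [hrdef, hqdef]
    rw [measureReal_def]; linarith
  have hstepB : ∀ n, b (n+1) ≤ r * b n := by
    intro n
    have hpt : ∀ ω, I (n+1) ω
        = (fun (v : ↥(Finset.range n) → ℝ) (z : ℝ) =>
            Jf ρ n v * (Set.Icc 0 ρ).indicator (fun _ => (1:ℝ)) (psum n n v + z))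
          (fun i => X i ω) (X n ω) := by
      intro ω
      simp only
      rw [hSpsum n ω, ← hIJ n ω, hIsucc n ω]
    have hFm : Measurable (Function.uncurry
        (fun (v : ↥(Finset.range n) → ℝ) (z : ℝ) =>
          Jf ρ n v * (Set.Icc 0 ρ).indicator (fun _ => (1:ℝ)) (psum n n v + z))) := by
      apply Measurable.mul
      · exact (Jf_meas ρ n).comp measurable_fst
      · exact (Measurable.indicator measurable_const measurableSet_Icc).comp
          (((psum_meas n n).comp measurable_fst).add measurable_snd)
    have hFb : ∀ (v : ↥(Finset.range n) → ℝ) (z : ℝ),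
        |Jf ρ n v * (Set.Icc 0 ρ).indicator (fun _ => (1:ℝ)) (psum n n v + z)| ≤ 1 := by
      intro v z
      rw [abs_mul]
      have h1 : |Jf ρ n v| ≤ 1 := by rcases hJ01 n v with h | h <;> rw [h] <;> norm_num
      have h2 : |(Set.Icc 0 ρ).indicator (fun _ => (1:ℝ)) (psum n n v + z)| ≤ 1 := by
        rw [Set.indicator_apply]; split <;> norm_num
      calc _ ≤ 1 * 1 := mul_le_mul h1 h2 (abs_nonneg _) one_pos.le
        _ = 1 := one_mul 1
    have hb1 : b (n+1) = ∫ v, (∫ z, Jf ρ n v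
        * (Set.Icc 0 ρ).indicator (fun _ => (1:ℝ)) (psum n n v + z) ∂laplaceMeasure)
        ∂(P.map (fun ω (i : ↥(Finset.range n)) => X i ω)) := by
      rw [hbdef]
      simp only
      rw [integral_congr_ae (ae_of_all _ hpt), step_fubini X hmeas hindep hlaw n _ hFm _ hFb]
    rw [hb1]
    have hmono : ∀ (v : ↥(Finset.range n) → ℝ),
        (∫ z, Jf ρ n v * (Set.Icc 0 ρ).indicator (fun _ => (1:ℝ)) (psum n n v + z)
          ∂laplaceMeasure) ≤ r * Jf ρ n v := by
      intro v
      rw [integral_const_mul]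
      rcases hJ01 n v with h | h
      · rw [h]; simp
      · rw [h, one_mul, mul_one]
        exact hstrip _ (hJmem n v h)
    have hnn : ∀ (v : ↥(Finset.range n) → ℝ),
        0 ≤ ∫ z, Jf ρ n v * (Set.Icc 0 ρ).indicator (fun _ => (1:ℝ)) (psum n n v + z)
          ∂laplaceMeasure := by
      intro v
      apply integral_nonneg
      intro z
      apply mul_nonneg (Jf_nonneg ρ n v)
      rw [Set.indicator_apply]; split <;> norm_num
    haveI : IsProbabilityMeasure (P.map (fun ω (i : ↥(Finset.range n)) => X i ω)) :=
      Measure.isProbabilityMeasure_map (hVm n).aemeasurable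
    have hintr : Integrable (fun (v : ↥(Finset.range n) → ℝ) => r * Jf ρ n v)
        (P.map (fun ω (i : ↥(Finset.range n)) => X i ω)) := by
      apply integrable_of_bound (measurable_const.mul (Jf_meas ρ n)) (|r| * 1)
      intro v
      rw [Pi.mul_apply, abs_mul]
      apply mul_le_mul_of_nonneg_left _ (abs_nonneg r)
      rcases hJ01 n v with h | h <;> rw [h] <;> norm_num
    calc (∫ v, (∫ z, Jf ρ n v * (Set.Icc 0 ρ).indicator (fun _ => (1:ℝ)) (psum n n v + z)
          ∂laplaceMeasure) ∂(P.map (fun ω (i : ↥(Finset.range n)) => X i ω)))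
        ≤ ∫ v, r * Jf ρ n v ∂(P.map (fun ω (i : ↥(Finset.range n)) => X i ω)) :=
          integral_mono_of_nonneg (ae_of_all _ hnn) hintr (ae_of_all _ hmono)
      _ = r * b n := by
          rw [integral_const_mul, integral_map (hVm n).aemeasurable
            (Jf_meas ρ n).aestronglyMeasurable, hbdef]
          simp only
          congr 1
          exact integral_congr_ae (ae_of_all _ (fun ω => (hIJ n ω).symm))
  have hI0 : ∀ ω, I 0 ω = 1 := by
    intro ω
    simp only [hIdef]
    rw [if_pos]
    intro k hk
    simp at hk
  have hb0val : b 0 = 1 := by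
    rw [hbdef]
    simp only
    rw [integral_congr_ae (ae_of_all _ hI0)]
    simp
  have ha0val : a 0 = 1 + ρ / Real.sqrt 2 := by
    rw [hadef]
    have h0 : ∀ ω, I 0 ω * hf ρ (S 0 ω) = 1 + ρ / Real.sqrt 2 := by
      intro ω
      rw [hI0 ω, one_mul, hS0 ω]
      unfold hf
      rw [Set.indicator_of_mem (Set.mem_Icc.mpr ⟨le_refl (0:ℝ), hρ0⟩)]
      ring
    simp only
    rw [integral_congr_ae (ae_of_all _ h0), integral_const]
    simp
  have hintI : ∀ n, Integrable (fun ω => I n ω) P := by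
    intro n
    apply integrable_of_bound (hIm n) 1
    intro ω; rcases hI01 n ω with h | h <;> rw [h] <;> norm_num
  have hintIh : ∀ n, Integrable (fun ω => I n ω * hf ρ (S n ω)) P := by
    intro n
    apply integrable_of_bound ((hIm n).mul ((hf_meas ρ).comp (hSm n)))
      ((1 + ρ / Real.sqrt 2) + ρ * ρ)
    intro ω
    rw [Pi.mul_apply, Function.comp_apply, abs_mul]
    have h1 : |I n ω| ≤ 1 := by rcases hI01 n ω with h | h <;> rw [h] <;> norm_num
    have h2 : |hf ρ (S n ω)| ≤ (1 + ρ / Real.sqrt 2) + ρ * ρ := by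
      rw [abs_of_nonneg (hf_nonneg hρ0 _)]; exact hf_le hρ0 _
    calc |I n ω| * |hf ρ (S n ω)| ≤ 1 * ((1 + ρ / Real.sqrt 2) + ρ * ρ) :=
          mul_le_mul h1 h2 (abs_nonneg _) one_pos.le
      _ = _ := one_mul _
  have hb_nonneg : ∀ n, 0 ≤ b n := fun n => integral_nonneg (hInonneg n)
  have hba : ∀ n, b n ≤ a n := by
    intro n
    apply integral_mono (hintI n) (hintIh n)
    intro ω
    rcases hI01 n ω with h | h
    · simp only [h, zero_mul]; exact le_refl 0
    · simp only [h, one_mul]; exact hf_ge_one hρ0 (hImem n ω h)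
  have hab : ∀ n, a n ≤ ((1 + ρ / Real.sqrt 2) + ρ * ρ) * b n := by
    intro n
    have hin : Integrable (fun ω => ((1 + ρ / Real.sqrt 2) + ρ * ρ) * I n ω) P :=
      (hintI n).const_mul _
    rw [hadef, hbdef]
    simp only
    rw [← integral_const_mul]
    apply integral_mono (hintIh n) hin
    intro ω
    rcases hI01 n ω with h | h
    · simp [h]
    · simp only [h, one_mul, mul_one]; exact hf_le hρ0 _
  have hbr : ∀ n, b n ≤ r ^ n := by
    intro n
    induction n with
    | zero => rw [hb0val, pow_zero]
    | succ n ih =>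
      calc b (n+1) ≤ r * b n := hstepB n
        _ ≤ r * r ^ n := mul_le_mul_of_nonneg_left ih hr0
        _ = r ^ (n+1) := by ring
  have hsumN : ∀ N, ∑ n ∈ Finset.range N, b n = a 0 - a N := by
    intro N
    induction N with
    | zero => simp
    | succ N ih => rw [Finset.sum_range_succ, ih, hstepA N]; ring
  have hsummable : Summable b :=
    Summable.of_nonneg_of_le hb_nonneg hbr (summable_geometric_of_lt_one hr0 hr1)
  have haN0 : Tendsto a atTop (𝓝 0) := by
    apply squeeze_zero (fun n => le_trans (hb_nonneg n) (hba n))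
      (fun n => le_trans (hab n) (mul_le_mul_of_nonneg_left (hbr n) hB))
    have h5 := (tendsto_pow_atTop_nhds_zero_of_lt_one hr0 hr1).const_mul
      ((1 + ρ / Real.sqrt 2) + ρ * ρ)
    simpa using h5
  have htsum : ∑' n, b n = 1 + ρ / Real.sqrt 2 := by
    have h1 := hsummable.hasSum.tendsto_sum_nat
    have h2 : Tendsto (fun N => a 0 - a N) atTop (𝓝 (a 0 - 0)) := tendsto_const_nhds.sub haN0
    have h3 : Tendsto (fun N => ∑ n ∈ Finset.range N, b n) atTop (𝓝 (a 0 - 0)) := by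
      simp only [hsumN]; exact h2
    have h4 := tendsto_nhds_unique h1 h3
    rw [h4, ha0val, sub_zero]
  set A : ℕ → Set Ω := fun n => {ω | ∀ k ∈ Finset.Icc 1 n, S k ω ∈ Set.Icc 0 ρ} with hAdef
  have hbA : ∀ n, ENNReal.ofReal (b n) = P (A n) := by
    intro n
    have hIind : (fun ω => I n ω) = (A n).indicator (fun _ => (1:ℝ)) := by
      funext ω
      simp only [hIdef, hAdef, Set.indicator_apply, Set.mem_setOf_eq]
      congr
    have hbP : b n = (P (A n)).toReal := by
      rw [hbdef]; simp only
      rw [hIind, integral_indicator_const _ (hAmeas n), smul_eq_mul, mul_one]; rfl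
    rw [hbP, ENNReal.ofReal_toReal (measure_ne_top _ _)]
  set E : Set Ω := {ω | ∃ m : ℕ, 0 < m ∧ (S m ω < 0 ∨ ρ < S m ω)} with hEdef
  have hEmeas : MeasurableSet E := by
    have hE1 : E = ⋃ m : ℕ, {ω | 0 < m ∧ (S m ω < 0 ∨ ρ < S m ω)} := by
      ext ω; simp [hEdef]
    rw [hE1]
    apply MeasurableSet.iUnion
    intro m
    by_cases hm : 0 < m
    · have hE2 : {ω | 0 < m ∧ (S m ω < 0 ∨ ρ < S m ω)}
          = {ω | S m ω < 0} ∪ {ω | ρ < S m ω} := by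
        ext ω; simp [hm]
      rw [hE2]
      exact (measurableSet_lt (hSm m) measurable_const).union
        (measurableSet_lt measurable_const (hSm m))
    · have hE2 : {ω | 0 < m ∧ (S m ω < 0 ∨ ρ < S m ω)} = ∅ := by
        ext ω; simp [hm]
      rw [hE2]; exact MeasurableSet.empty
  have hτ_iff : ∀ ω, (τ ω = 0 ↔ ω ∉ E) := by
    intro ω
    rw [hτ ω]
    unfold exitTime
    constructor
    · intro h0 hE
      rw [hEdef, Set.mem_setOf_eq] at hE
      obtain ⟨m, hm⟩ := hE
      have hne : {n : ℕ | 0 < n ∧ (S n ω < 0 ∨ ρ < S n ω)}.Nonempty := ⟨m, hm⟩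
      have hmem := Nat.sInf_mem hne
      rw [h0] at hmem
      exact absurd hmem.1 (lt_irrefl 0)
    · intro hE
      have hemp : {n : ℕ | 0 < n ∧ (S n ω < 0 ∨ ρ < S n ω)} = ∅ := by
        ext m
        simp only [Set.mem_setOf_eq, Set.mem_empty_iff_false, iff_false]
        intro hm
        exact hE (by rw [hEdef]; exact ⟨m, hm⟩)
      rw [hemp, Nat.sInf_empty]
  have hτgt : ∀ (n : ℕ) ω, (n < τ ω ↔ ω ∈ A n ∩ E) := by
    intro n ω
    rw [hτ ω]
    unfold exitTime
    constructor
    · intro h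
      have hne : {m : ℕ | 0 < m ∧ (S m ω < 0 ∨ ρ < S m ω)}.Nonempty := by
        by_contra hc
        rw [Set.not_nonempty_iff_eq_empty] at hc
        rw [hc, Nat.sInf_empty] at h
        omega
      constructor
      · intro k hk
        rcases Finset.mem_Icc.mp hk with ⟨hk1, hk2⟩
        by_contra hmem
        have hexit : S k ω < 0 ∨ ρ < S k ω := by
          rcases lt_or_ge (S k ω) 0 with hlt | hge
          · exact Or.inl hlt
          · right
            rw [Set.mem_Icc] at hmem
            push_neg at hmem
            exact hmem hge
        have hle := Nat.sInf_le (show k ∈ {m : ℕ | 0 < m ∧ (S m ω < 0 ∨ ρ < S m ω)}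
          from ⟨by omega, hexit⟩)
        omega
      · obtain ⟨m, hm⟩ := hne
        rw [hEdef]; exact ⟨m, hm⟩
    · rintro ⟨hA, hE⟩
      rw [hEdef, Set.mem_setOf_eq] at hE
      obtain ⟨m, hm⟩ := hE
      have hne : {m : ℕ | 0 < m ∧ (S m ω < 0 ∨ ρ < S m ω)}.Nonempty := ⟨m, hm⟩
      have hmem := Nat.sInf_mem hne
      by_contra hc
      push_neg at hc
      have h2 := hA (sInf {m : ℕ | 0 < m ∧ (S m ω < 0 ∨ ρ < S m ω)})
        (Finset.mem_Icc.mpr ⟨hmem.1, hc⟩)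
      rw [Set.mem_Icc] at h2
      rcases hmem.2 with h | h
      · linarith [h2.1]
      · linarith [h2.2]
  have hEcA : ∀ n, Eᶜ ⊆ A n := by
    intro n ω hω
    intro k hk
    rcases Finset.mem_Icc.mp hk with ⟨hk1, hk2⟩
    rw [Set.mem_compl_iff, hEdef, Set.mem_setOf_eq] at hω
    push_neg at hω
    have h1 := hω k (by omega)
    rw [Set.mem_Icc]
    exact ⟨h1.1, h1.2⟩
  have hPEc : P Eᶜ = 0 := by
    have hle : ∀ n, P Eᶜ ≤ ENNReal.ofReal (r ^ n) := by
      intro n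
      calc P Eᶜ ≤ P (A n) := measure_mono (hEcA n)
        _ = ENNReal.ofReal (b n) := (hbA n).symm
        _ ≤ ENNReal.ofReal (r ^ n) := ENNReal.ofReal_le_ofReal (hbr n)
    have hlim : Tendsto (fun n => ENNReal.ofReal (r ^ n)) atTop (𝓝 0) := by
      have h6 := ENNReal.tendsto_ofReal
        (tendsto_pow_atTop_nhds_zero_of_lt_one hr0 hr1)
      simpa using h6
    exact le_antisymm (ge_of_tendsto' hlim hle) zero_le
  have hPgt : ∀ n : ℕ, P {ω | n < τ ω} = ENNReal.ofReal (b n) := by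
    intro n
    have hset : {ω | n < τ ω} = A n ∩ E := by
      ext ω; exact hτgt n ω
    rw [hset, hbA n]
    apply le_antisymm (measure_mono Set.inter_subset_left)
    calc P (A n) ≤ P ((A n ∩ E) ∪ Eᶜ) := measure_mono (fun ω hω => by
        by_cases hE : ω ∈ E
        · exact Or.inl ⟨hω, hE⟩
        · exact Or.inr hE)
      _ ≤ P (A n ∩ E) + P Eᶜ := measure_union_le _ _
      _ = P (A n ∩ E) := by rw [hPEc, add_zero]
  have hτmeas : Measurable τ := by
    apply measurable_to_countable'
    intro y
    match y with
    | 0 =>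
      have hset : τ ⁻¹' {0} = Eᶜ := by
        ext ω
        simp only [Set.mem_preimage, Set.mem_singleton_iff, Set.mem_compl_iff]
        exact hτ_iff ω
      rw [hset]; exact hEmeas.compl
    | (j+1) =>
      have hset : τ ⁻¹' {j+1} = (A j ∩ E) ∩ ((A (j+1) ∩ E))ᶜ := by
        ext ω
        simp only [Set.mem_preimage, Set.mem_singleton_iff, Set.mem_inter_iff,
          Set.mem_compl_iff]
        constructor
        · intro h
          have h1 : j < τ ω := by omega
          have h2 : ¬ (j+1 < τ ω) := by omega
          exact ⟨(hτgt j ω).mp h1, fun hc => h2 ((hτgt (j+1) ω).mpr hc)⟩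
        · rintro ⟨h1, h2⟩
          have hj : j < τ ω := (hτgt j ω).mpr h1
          have hj2 : ¬ (j+1 < τ ω) := fun hc => h2 ((hτgt (j+1) ω).mp hc)
          omega
      rw [hset]
      exact (((hAmeas j).inter hEmeas)).inter (((hAmeas (j+1)).inter hEmeas)).compl
  have hτsets : ∀ n : ℕ, MeasurableSet {ω | n < τ ω} := by
    intro n
    have hset : {ω | n < τ ω} = τ ⁻¹' (Set.Ioi n) := rfl
    rw [hset]; exact hτmeas measurableSet_Ioi
  have hpt_sum : ∀ ω, (τ ω : ℝ≥0∞)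
      = ∑' n : ℕ, Set.indicator {ω' | n < τ ω'} (fun _ => (1:ℝ≥0∞)) ω := by
    intro ω
    have h1 : ∀ n : ℕ, Set.indicator {ω' | n < τ ω'} (fun _ => (1:ℝ≥0∞)) ω
        = if n < τ ω then 1 else 0 := by
      intro n
      simp [Set.indicator_apply, Set.mem_setOf_eq]
    rw [tsum_congr h1,
      tsum_eq_sum (s := Finset.range (τ ω)) (fun n hn => if_neg (by simpa using hn)),
      Finset.sum_congr rfl (fun n hn => if_pos (Finset.mem_range.mp hn))]
    simp
  have hlint : ∫⁻ ω, (τ ω : ℝ≥0∞) ∂P = ENNReal.ofReal (1 + ρ / Real.sqrt 2) := by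
    calc ∫⁻ ω, (τ ω : ℝ≥0∞) ∂P
        = ∫⁻ ω, ∑' n : ℕ, Set.indicator {ω' | n < τ ω'} (fun _ => (1:ℝ≥0∞)) ω ∂P :=
          lintegral_congr hpt_sum
      _ = ∑' n : ℕ, ∫⁻ ω, Set.indicator {ω' | n < τ ω'} (fun _ => (1:ℝ≥0∞)) ω ∂P :=
          lintegral_tsum (fun n => (measurable_const.indicator (hτsets n)).aemeasurable)
      _ = ∑' n : ℕ, P {ω | n < τ ω} :=
          tsum_congr (fun n => lintegral_indicator_one (hτsets n))
      _ = ∑' n : ℕ, ENNReal.ofReal (b n) := tsum_congr (fun n => hPgt n)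
      _ = ENNReal.ofReal (∑' n, b n) :=
          (ENNReal.ofReal_tsum_of_nonneg hb_nonneg hsummable).symm
      _ = _ := by rw [htsum]
  have hmain : ∫ ω, (τ ω : ℝ) ∂P = 1 + ρ / Real.sqrt 2 := by
    have hmeasτ : AEStronglyMeasurable (fun ω => (τ ω : ℝ)) P :=
      ((Measurable.of_discrete (f := fun n : ℕ => (n:ℝ))).comp hτmeas).aestronglyMeasurable
    rw [integral_eq_lintegral_of_nonneg_ae (ae_of_all _ (fun ω => by positivity)) hmeasτ]
    have hcast : ∀ ω, ENNReal.ofReal ((τ ω : ℝ)) = (τ ω : ℝ≥0∞) :=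
      fun ω => ENNReal.ofReal_natCast _
    rw [lintegral_congr hcast, hlint, ENNReal.toReal_ofReal (by positivity)]
  exact ⟨hmain, by rw [hmain]⟩
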